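/- Let f₁ = x² + a₁₂xy² + a₀₃y³ + O(4) and f₂ = xy + b̄₁₂xy² + b₀₃y³ + O(4) with a₀₃ = 0 and a₁₂ ≠ 0. Then the projective transformation given by q₁ = a₁₂x + a₁₂b₁₂w, q₂ = y, q₃ = a₁₂²z, q₄ = a₁₂w, p = 1 + 2b₁₂y transforms the 3-jet into (x² + xy², xy + γy³) with γ = b₀₃/a₁₂, modulo terms of degree ≥ 4. -/
import Mathlib
open Filter Asymptotics Topology

lemma mono_o (i j : ℕ) (h : 4 ≤ i + j) :
    (fun v : ℝ × ℝ => v.1 ^ i * v.2 ^ j) =o[𝓝 (0 : ℝ × ℝ)] fun v => ‖v‖ ^ 3 := by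
  have hbig : (fun v : ℝ × ℝ => v.1 ^ i * v.2 ^ j) =O[𝓝 (0 : ℝ × ℝ)]
      fun v => ‖v‖ ^ (i + j) := by
    apply isBigO_of_le
    intro v
    have h1 : |v.1| ≤ ‖v‖ := by simpa using norm_fst_le v
    have h2 : |v.2| ≤ ‖v‖ := by simpa using norm_snd_le v
    rw [norm_mul, norm_pow, norm_pow, Real.norm_eq_abs, Real.norm_eq_abs,
      Real.norm_eq_abs, abs_pow, abs_norm, pow_add]
    gcongr
  refine hbig.trans_isLittleO ?_
  have : (fun v : ℝ × ℝ => ‖v‖ ^ (i + j)) = fun v => ‖v‖ ^ (i + j - 3) * ‖v‖ ^ 3 := by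
    funext v; rw [← pow_add]; congr 1; omega
  rw [this]
  have hlo : (fun v : ℝ × ℝ => ‖v‖ ^ (i + j - 3)) =o[𝓝 (0 : ℝ × ℝ)] fun _ => (1 : ℝ) := by
    rw [isLittleO_one_iff]
    have : Tendsto (fun v : ℝ × ℝ => ‖v‖) (𝓝 0) (𝓝 0) := by
      simpa using (continuous_norm (E := ℝ × ℝ)).tendsto 0
    have := this.pow (i + j - 3)
    simpa [zero_pow (by omega : i + j - 3 ≠ 0)] using this
  simpa using hlo.mul_isBigO (isBigO_refl (fun v : ℝ × ℝ => ‖v‖ ^ 3) _)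

lemma cmul_o (c : ℝ) (i j : ℕ) (h : 4 ≤ i + j) :
    (fun v : ℝ × ℝ => c * (v.1 ^ i * v.2 ^ j)) =o[𝓝 (0 : ℝ × ℝ)] fun v => ‖v‖ ^ 3 :=
  (mono_o i j h).const_mul_left c

theorem jet3_parabolic_P_normal_form
    (a12 b12 b03 : ℝ) (ha12 : a12 ≠ 0)
    (γ : ℝ) (hγ : γ = b03 / a12)
    (f₁ f₂ g₁ g₂ P Q₁ Q₂ Q₃ Q₄ : ℝ × ℝ → ℝ)
    (hf₁ : f₁ = fun v => v.1 ^ 2 + a12 * v.1 * v.2 ^ 2)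
    (hf₂ : f₂ = fun v => v.1 * v.2 + b12 * v.1 * v.2 ^ 2 + b03 * v.2 ^ 3)
    (hg₁ : g₁ = fun v => v.1 ^ 2 + v.1 * v.2 ^ 2)
    (hg₂ : g₂ = fun v => v.1 * v.2 + γ * v.2 ^ 3)
    (hQ₁ : Q₁ = fun v => a12 * v.1 + a12 * b12 * g₂ v)
    (hQ₂ : Q₂ = fun v => v.2)
    (hQ₃ : Q₃ = fun v => a12 ^ 2 * g₁ v)
    (hQ₄ : Q₄ = fun v => a12 * g₂ v)
    (hP : P = fun v => 1 + 2 * b12 * v.2) :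
    ((fun v : ℝ × ℝ => Q₃ v / P v - f₁ (Q₁ v / P v, Q₂ v / P v))
        =o[𝓝 (0 : ℝ × ℝ)] fun v => ‖v‖ ^ 3) ∧
    ((fun v : ℝ × ℝ => Q₄ v / P v - f₂ (Q₁ v / P v, Q₂ v / P v))
        =o[𝓝 (0 : ℝ × ℝ)] fun v => ‖v‖ ^ 3) := by
  subst hγ hf₁ hf₂ hg₁ hg₂ hQ₁ hQ₂ hQ₃ hQ₄ hP
  set N1 : ℝ × ℝ → ℝ := fun v =>
    3 * a12 ^ 2 * b12 * (v.1 ^ 1 * v.2 ^ 3) + (-2 * a12 * b12 * b03) * (v.1 ^ 1 * v.2 ^ 3)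
    + (-(a12 ^ 2 * b12 ^ 2)) * (v.1 ^ 2 * v.2 ^ 2)
    + (4 * a12 ^ 2 * b12 ^ 2) * (v.1 ^ 1 * v.2 ^ 4)
    + (-6 * a12 * b12 ^ 2 * b03) * (v.1 ^ 1 * v.2 ^ 4)
    + (-2 * a12 ^ 2 * b12 ^ 3) * (v.1 ^ 2 * v.2 ^ 3)
    + (-4 * a12 * b12 ^ 3 * b03) * (v.1 ^ 1 * v.2 ^ 5)
    + (-(a12 * b12 * b03)) * (v.1 ^ 0 * v.2 ^ 5)
    + (-(b12 ^ 2 * b03 ^ 2)) * (v.1 ^ 0 * v.2 ^ 6)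
    + (-2 * b12 ^ 3 * b03 ^ 2) * (v.1 ^ 0 * v.2 ^ 7) with hN1def
  set N2 : ℝ × ℝ → ℝ := fun v =>
    a12 * b12 ^ 2 * (v.1 ^ 1 * v.2 ^ 3) + 3 * b12 * b03 * (v.1 ^ 0 * v.2 ^ 4)
    + b12 ^ 2 * b03 * (v.1 ^ 0 * v.2 ^ 5) with hN2def
  have hN1 : N1 =o[𝓝 (0 : ℝ × ℝ)] fun v => ‖v‖ ^ 3 :=
    ((((((((((cmul_o (3 * a12 ^ 2 * b12) 1 3 (by norm_num)).add
      (cmul_o (-2 * a12 * b12 * b03) 1 3 (by norm_num))).add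
      (cmul_o (-(a12 ^ 2 * b12 ^ 2)) 2 2 (by norm_num))).add
      (cmul_o (4 * a12 ^ 2 * b12 ^ 2) 1 4 (by norm_num))).add
      (cmul_o (-6 * a12 * b12 ^ 2 * b03) 1 4 (by norm_num))).add
      (cmul_o (-2 * a12 ^ 2 * b12 ^ 3) 2 3 (by norm_num))).add
      (cmul_o (-4 * a12 * b12 ^ 3 * b03) 1 5 (by norm_num))).add
      (cmul_o (-(a12 * b12 * b03)) 0 5 (by norm_num))).add
      (cmul_o (-(b12 ^ 2 * b03 ^ 2)) 0 6 (by norm_num))).add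
      (cmul_o (-2 * b12 ^ 3 * b03 ^ 2) 0 7 (by norm_num)))
  have hN2 : N2 =o[𝓝 (0 : ℝ × ℝ)] fun v => ‖v‖ ^ 3 :=
    (((cmul_o (a12 * b12 ^ 2) 1 3 (by norm_num)).add
      (cmul_o (3 * b12 * b03) 0 4 (by norm_num))).add
      (cmul_o (b12 ^ 2 * b03) 0 5 (by norm_num)))
  have hPt : Tendsto (fun v : ℝ × ℝ => 1 + 2 * b12 * v.2) (𝓝 0) (𝓝 1) := by
    have hc : Continuous fun v : ℝ × ℝ => 1 + 2 * b12 * v.2 := by continuity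
    simpa using hc.tendsto 0
  have hPne : ∀ᶠ v in 𝓝 (0 : ℝ × ℝ), (1 + 2 * b12 * v.2) ≠ 0 :=
    hPt.eventually_ne one_ne_zero
  have hinv2 : (fun v : ℝ × ℝ => ((1 + 2 * b12 * v.2) ^ 2)⁻¹) =O[𝓝 (0 : ℝ × ℝ)]
      fun _ => (1 : ℝ) := ((hPt.pow 2).inv₀ (by norm_num)).isBigO_one ℝ
  have hinv3 : (fun v : ℝ × ℝ => ((1 + 2 * b12 * v.2) ^ 3)⁻¹) =O[𝓝 (0 : ℝ × ℝ)]
      fun _ => (1 : ℝ) := ((hPt.pow 3).inv₀ (by norm_num)).isBigO_one ℝ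
  constructor
  · refine (hN1.mul_isBigO hinv3).congr' ?_ (by simp)
    filter_upwards [hPne] with v hv
    show N1 v * ((1 + 2 * b12 * v.2) ^ 3)⁻¹ = _
    rw [hN1def]
    simp only
    field_simp
    ring
  · refine (hN2.mul_isBigO hinv3).congr' ?_ (by simp)
    filter_upwards [hPne] with v hv
    show N2 v * ((1 + 2 * b12 * v.2) ^ 3)⁻¹ = _
    rw [hN2def]
    simp only
    field_simp
    ring
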